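/- Let M be a finite poset in which the longest strictly increasing chain has at most D+1 elements, and let ψ : M → {0,1} be any function. Then there exist functions φ_1, …, φ_{D+1} : M → {0,1}, each monotone, such that for all x ∈ M: ψ(x) = φ_1(x) ⊟ (φ_2(x) ⊟ (⋯ ⊟ φ_{D+1}(x))) where a ⊟ b := a ∧ ¬b. -/

import Mathlib

/-- Boolean non-implication: `a ⊟ b = a ∧ ¬b`. -/
def bnimp (a b : Bool) : Bool := a && !b

/-- `nimpChain a [b₁,…,bₘ]` is `a ⊟ (b₁ ⊟ (⋯ ⊟ bₘ))`, associating to the right. -/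
def nimpChain : Bool → List Bool → Bool
  | a, [] => a
  | a, b :: rest => bnimp a (nimpChain b rest)

/-- For a "threshold" sequence measured against `k ≤ n+1`, the nested
non-implication computes the parity of `k`. -/
theorem nimp_ofFn (n : ℕ) : ∀ k : ℕ, k ≤ n + 1 →
    nimpChain (decide (1 ≤ k)) (List.ofFn fun i : Fin n => decide ((i : ℕ) + 2 ≤ k))
      = decide (k % 2 = 1) := by
  induction n with
  | zero =>
    intro k hk
    interval_cases k <;> simp [nimpChain]
  | succ n ih =>
    intro k hk
    rw [List.ofFn_succ]
    show nimpChain _ (_ :: _) = _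
    rw [nimpChain]
    have hlist : (List.ofFn fun i : Fin n => decide (((Fin.succ i : Fin (n+1)) : ℕ) + 2 ≤ k))
        = List.ofFn fun i : Fin n => decide ((i : ℕ) + 2 ≤ k - 1) := by
      refine congrArg _ (funext fun i => ?_)
      simp only [Fin.val_succ, decide_eq_decide]
      omega
    have hhead : decide (((0 : Fin (n+1)) : ℕ) + 2 ≤ k) = decide (1 ≤ k - 1) := by
      simp only [Fin.val_zero, decide_eq_decide]
      exact decide_eq_decide.mpr (by omega)
    rw [hlist, hhead, ih (k - 1) (by omega)]
    rcases Nat.even_or_odd k with h | h <;>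
      rcases Nat.eq_zero_or_pos k with h0 | h0 <;>
        simp_all [bnimp, Nat.even_iff, Nat.odd_iff, decide_eq_true_eq] <;> omega

/-- Theorem 1 of the paper specialized to `L = {0,1}`: if every strictly
increasing chain in the finite poset `M` has at most `D+1` elements, then every
`ψ : M → {0,1}` decomposes as `φ₁ ⊟ (φ₂ ⊟ (⋯ ⊟ φ_{D+1}))` with all `φᵢ`
monotone. -/
theorem boolean_approximating_form (M : Type*) [PartialOrder M] [Fintype M] (D : ℕ)
    (hM : ¬∃ c : Fin (D + 2) → M, StrictMono c) (ψ : M → Bool) :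
    ∃ φ : Fin (D + 1) → M → Bool,
      (∀ i, Monotone (φ i)) ∧
      ∀ x, ψ x = nimpChain (φ 0 x) (List.ofFn fun i : Fin D => φ i.succ x) := by
  classical
  -- `P x k` : there is an alternating chain of length `k` below `x`,
  -- whose bottom element has value `true`.
  set P : M → ℕ → Prop := fun x k =>
    ∃ c : Fin k → M, StrictMono c ∧ (∀ j, c j ≤ x) ∧
      ∀ j : Fin k, ψ (c j) = decide (Even (j : ℕ)) with hPdef
  have hP0 : ∀ x, P x 0 :=
    fun x => ⟨Fin.elim0, fun a => a.elim0, fun a => a.elim0, fun a => a.elim0⟩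
  have hPbound : ∀ x k, P x k → k ≤ D + 1 := by
    rintro x k ⟨c, hc, -, -⟩
    by_contra h
    push_neg at h
    exact hM ⟨fun i => c (Fin.castLE (by omega) i), fun a b hab => hc (by simpa using hab)⟩
  set g : M → ℕ := fun x => Nat.findGreatest (P x) (D + 1) with hgdef
  have hg_le : ∀ x, g x ≤ D + 1 := fun x => Nat.findGreatest_le _
  have hgP : ∀ x, P x (g x) := fun x => Nat.findGreatest_spec (Nat.zero_le _) (hP0 x)
  have hg_mono : Monotone g := by
    intro x y hxy
    obtain ⟨c, hc, hle, hψc⟩ := hgP x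
    exact Nat.le_findGreatest (hg_le x) ⟨c, hc, fun j => (hle j).trans hxy, hψc⟩
  have hnotP : ∀ x, ¬ P x (g x + 1) := by
    intro x hP1
    exact Nat.findGreatest_is_greatest (Nat.lt_succ_self _) (hPbound x _ hP1) hP1
  -- the key parity identity
  have hψg : ∀ x, ψ x = decide (g x % 2 = 1) := by
    intro x
    by_contra hne
    have hψx : ψ x = decide (Even (g x)) := by
      have hb : ψ x = !decide (g x % 2 = 1) := by
        cases hx : ψ x <;> rw [hx] at hne <;>
          cases hd : decide (g x % 2 = 1) <;> rw [hd] at hne <;>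
            first
              | rfl
              | exact absurd rfl hne
      rw [hb, ← decide_not]
      simp only [decide_eq_decide, Nat.even_iff]
      omega
    apply hnotP x
    obtain ⟨c, hc, hle, hψc⟩ := hgP x
    have hlt : ∀ j : Fin (g x), c j < x := by
      intro j
      rcases lt_or_eq_of_le (hle j) with h | h
      · exact h
      · exfalso
        have hgpos : 0 < g x := j.pos
        have hmono : c j ≤ c ⟨g x - 1, by omega⟩ :=
          hc.monotone (by simp [Fin.le_def]; omega)
        rw [h] at hmono
        have hlast : c ⟨g x - 1, by omega⟩ = x :=
          le_antisymm (hle _) hmono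
        have e1 := hψc ⟨g x - 1, by omega⟩
        rw [hlast, hψx] at e1
        simp only [decide_eq_decide, Nat.even_iff] at e1
        omega
    refine ⟨fun j => if h : (j : ℕ) < g x then c ⟨j, h⟩ else x, ?_, ?_, ?_⟩
    · intro a b hab
      have hab' : (a : ℕ) < (b : ℕ) := hab
      by_cases hb : (b : ℕ) < g x
      · have ha : (a : ℕ) < g x := by omega
        dsimp only
        rw [dif_pos ha, dif_pos hb]
        exact hc (Fin.mk_lt_mk.mpr hab')
      · have ha : (a : ℕ) < g x := by
          have := b.isLt; omega
        dsimp only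
        rw [dif_pos ha, dif_neg hb]
        exact hlt _
    · intro j
      by_cases hj : (j : ℕ) < g x
      · dsimp only; rw [dif_pos hj]; exact (hlt ⟨j, hj⟩).le
      · dsimp only; rw [dif_neg hj]
    · intro j
      by_cases hj : (j : ℕ) < g x
      · dsimp only; rw [dif_pos hj]; exact hψc ⟨j, hj⟩
      · have hje : (j : ℕ) = g x := by have := j.isLt; omega
        dsimp only; rw [dif_neg hj, hje]
        exact hψx
  refine ⟨fun i x => decide ((i : ℕ) + 1 ≤ g x), ?_, ?_⟩
  · intro i x y hxy
    have h := hg_mono hxy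
    by_cases hx : (i : ℕ) + 1 ≤ g x
    · have hy : (i : ℕ) + 1 ≤ g y := by omega
      simp [hx, hy]
    · simp [hx]
  · intro x
    have h := nimp_ofFn D (g x) (hg_le x)
    rw [hψg x, ← h]
    congr 1
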